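/- Let ∅ ≠ A ⊆ R̃^d be internal and sharply bounded, and let (A_ε)_ε be any sharply bounded representative of A. Then the following three sets coincide: (i) N(A); (ii) the set of nets (u_ε)_ε of smooth functions ℝ^d → ℂ such that for every multi-index α and every m ∈ ℕ there exists N ∈ ℕ with sup_{x ∈ A_ε + ε^N} |∂^α u_ε(x)| ≤ ε^m for all sufficiently small ε; (iii) the set of nets (u_ε)_ε ∈ E_M(A) such that for every multi-index α the net (sup_{x ∈ A_ε} |∂^α u_ε(x)|)_ε is negligible. -/

import Mathlib

open Real Set Metric MeasureTheory Filter

noncomputable section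

/-- `P ε` holds for all sufficiently small `ε ∈ (0,1)`. -/
def EvSmall (P : ℝ → Prop) : Prop :=
  ∃ ε₀ : ℝ, 0 < ε₀ ∧ ε₀ < 1 ∧ ∀ ε : ℝ, 0 < ε → ε ≤ ε₀ → P ε

/-- A net `(u_ε)` with values in a seminormed group is moderate. -/
def Moderate {E : Type*} [SeminormedAddGroup E] (u : ℝ → E) : Prop :=
  ∃ N : ℕ, EvSmall fun ε => ‖u ε‖ ≤ ε ^ (-(N : ℝ))

/-- A net `(u_ε)` is negligible. -/
def Negligible {E : Type*} [SeminormedAddGroup E] (u : ℝ → E) : Prop :=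
  ∀ m : ℕ, EvSmall fun ε => ‖u ε‖ ≤ ε ^ (m : ℝ)

/-- Two nets represent the same generalized point. -/
def EqvNet {E : Type*} [SeminormedAddGroup E] (x y : ℝ → E) : Prop :=
  Negligible fun ε => x ε - y ε

/-- The set of generalized points of `Ẽ` (modelled as the moderate nets). -/
def GenPt (E : Type*) [SeminormedAddGroup E] : Set (ℝ → E) := {x | Moderate x}

/-- `x` is a representative of some generalized point belonging to `A`. -/
def IsReprOfPointOf {E : Type*} [SeminormedAddGroup E] (A : Set (ℝ → E)) (x : ℝ → E) : Prop :=
  Moderate x ∧ ∃ a ∈ A, EqvNet x a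

/-- The sharp norm `e^{-v(x)}` of a (moderate) net. -/
noncomputable def sharpNorm {E : Type*} [SeminormedAddGroup E] (x : ℝ → E) : ℝ :=
  sInf {r : ℝ | ∃ b : ℝ, r = Real.exp (-b) ∧ EvSmall fun ε => ‖x ε‖ ≤ ε ^ b}

/-- `A` is open for the sharp topology (as a set of generalized points). -/
def SharpOpen {E : Type*} [SeminormedAddGroup E] (A : Set (ℝ → E)) : Prop :=
  (∀ x ∈ A, Moderate x) ∧
  ∀ x ∈ A, ∃ r > 0, ∀ y : ℝ → E, Moderate y →
    sharpNorm (fun ε => y ε - x ε) < r → y ∈ A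

/-- `B` is a sharp neighbourhood of `A`. -/
def IsSharpNbhdOf {E : Type*} [SeminormedAddGroup E] (B A : Set (ℝ → E)) : Prop :=
  A ⊆ B ∧ ∀ x ∈ A, ∃ r > 0, ∀ y : ℝ → E, Moderate y →
    sharpNorm (fun ε => y ε - x ε) < r → y ∈ B

/-- The internal set with representative `(Aε)`. -/
def InternalSet {E : Type*} [SeminormedAddGroup E] (Aε : ℝ → Set E) : Set (ℝ → E) :=
  {x | Moderate x ∧ ∃ y : ℝ → E, EqvNet x y ∧ EvSmall fun ε => y ε ∈ Aε ε}

/-- `(Aε)` is a sharply bounded representative. -/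
def SharplyBddRep {E : Type*} [SeminormedAddGroup E] (Aε : ℝ → Set E) : Prop :=
  ∃ M : ℕ, EvSmall fun ε => ∀ x ∈ Aε ε, ‖x‖ ≤ ε ^ (-(M : ℝ))

/-- A set of generalized points is sharply bounded. -/
def SharplyBddSet {E : Type*} [SeminormedAddGroup E] (A : Set (ℝ → E)) : Prop :=
  ∃ C : ℝ, ∀ x ∈ A, sharpNorm x ≤ C

/-- The interleaved closure of a set of generalized points. -/
def interleaved {E : Type*} [SeminormedAddGroup E] (A : Set (ℝ → E)) : Set (ℝ → E) :=
  {x | ∃ (m : ℕ) (S : Fin m → Set ℝ) (y : Fin m → ℝ → E),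
    (∀ ε ∈ Set.Ioo (0:ℝ) 1, ∃! j, ε ∈ S j) ∧ (∀ j, y j ∈ A) ∧
    ∀ ε ∈ Set.Ioo (0:ℝ) 1, ∀ j, ε ∈ S j → x ε = y j ε}

/-- A net of smooth functions (smooth for each ε ∈ (0,1)). -/
def SmoothNet {V : Type*} [NormedAddCommGroup V] [NormedSpace ℝ V] (u : ℝ → V → ℂ) : Prop :=
  ∀ ε : ℝ, 0 < ε → ε < 1 → ContDiff ℝ (⊤ : ℕ∞) (u ε)

/-- The nets belonging to `E_M(A)` : all derivatives are moderate along the points of `A`. -/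
def EMod {V : Type*} [NormedAddCommGroup V] [NormedSpace ℝ V]
    (A : Set (ℝ → V)) (u : ℝ → V → ℂ) : Prop :=
  SmoothNet u ∧ ∀ (n : ℕ) (x : ℝ → V), IsReprOfPointOf A x →
    Moderate fun ε => iteratedFDeriv ℝ n (u ε) (x ε)

/-- The nets belonging to `N(A)` : all derivatives are negligible along the points of `A`. -/
def NNeg {V : Type*} [NormedAddCommGroup V] [NormedSpace ℝ V]
    (A : Set (ℝ → V)) (u : ℝ → V → ℂ) : Prop :=
  SmoothNet u ∧ ∀ (n : ℕ) (x : ℝ → V), IsReprOfPointOf A x →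
    Negligible fun ε => iteratedFDeriv ℝ n (u ε) (x ε)

/-- `u` and `v` define the same element of `G̃(A)`. -/
def GEq {V : Type*} [NormedAddCommGroup V] [NormedSpace ℝ V]
    (A : Set (ℝ → V)) (u v : ℝ → V → ℂ) : Prop :=
  NNeg A fun ε z => u ε z - v ε z

/-- `x̃ ≤ ỹ` in `R̃` (for the given representatives). -/
def RleNet (x y : ℝ → ℝ) : Prop := ∀ m : ℕ, EvSmall fun ε => x ε ≤ y ε + ε ^ (m : ℝ)

/-- `x̃ ≫ 0` in `R̃`. -/
def StrPosNet (x : ℝ → ℝ) : Prop := ∃ m : ℕ, EvSmall fun ε => ε ^ (m : ℝ) ≤ x ε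

/-- `x̃ ≪ ỹ` in `R̃`. -/
def RltlNet (x y : ℝ → ℝ) : Prop := StrPosNet fun ε => y ε - x ε

/-- The operator `∂̄ = ½(∂ₓ + i ∂_y)` on smooth functions `ℂ → ℂ`. -/
def dbar (u : ℂ → ℂ) (z : ℂ) : ℂ :=
  (fderiv ℝ u z 1 + Complex.I * fderiv ℝ u z Complex.I) / 2

/-- The iterated derivative `D^k u = ∂ₓ^k u`. -/
def Dpow : ℕ → (ℂ → ℂ) → ℂ → ℂ
  | 0, u => u
  | (k+1), u => Dpow k fun z => fderiv ℝ u z 1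

/-- `u ∈ G̃_H(A)` : generalized holomorphic functions on `A ⊆ C̃`. -/
def GHol (A : Set (ℝ → ℂ)) (u : ℝ → ℂ → ℂ) : Prop :=
  EMod A u ∧ NNeg A fun ε => dbar (u ε)

/-- A continuous, piecewise `C¹` function on `[0,1]` (with its partition). -/
structure PwC1Path where
  toFun : ℝ → ℂ
  n : ℕ
  pt : Fin (n + 1) → ℝ
  mono : Monotone pt
  first : pt 0 = 0
  last : pt (Fin.last n) = 1
  cont : ContinuousOn toFun (Set.Icc 0 1)
  piece : ∀ i : Fin n, ContDiffOn ℝ 1 toFun (Set.Icc (pt i.castSucc) (pt i.succ))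

/-- A net of piecewise `C¹` paths which is moderate for the `C¹_pw` norm. -/
def PathModerate (γ : ℝ → PwC1Path) : Prop :=
  (∃ N : ℕ, EvSmall fun ε => ∀ t ∈ Set.Icc (0:ℝ) 1, ‖(γ ε).toFun t‖ ≤ ε ^ (-(N:ℝ))) ∧
  (∃ N : ℕ, EvSmall fun ε => ∀ᵐ t ∂(volume.restrict (Set.Icc (0:ℝ) 1)),
      ‖deriv (γ ε).toFun t‖ ≤ ε ^ (-(N:ℝ)))

/-- Two nets of paths represent the same generalized path
(their difference is negligible for the `C¹_pw` norm). -/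
def PathEqv (γ γ' : ℝ → PwC1Path) : Prop :=
  ∀ m : ℕ, EvSmall fun ε =>
    (∀ t ∈ Set.Icc (0:ℝ) 1, ‖(γ ε).toFun t - (γ' ε).toFun t‖ ≤ ε ^ (m:ℝ)) ∧
    (∀ᵐ t ∂(volume.restrict (Set.Icc (0:ℝ) 1)),
      ‖deriv (γ ε).toFun t - deriv (γ' ε).toFun t‖ ≤ ε ^ (m:ℝ))

/-- `γ` is a (generalized) path in `A ⊆ C̃`. -/
def PathIn (A : Set (ℝ → ℂ)) (γ : ℝ → PwC1Path) : Prop :=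
  PathModerate γ ∧ ∀ t : ℝ → ℝ, (∀ ε, t ε ∈ Set.Icc (0:ℝ) 1) →
    IsReprOfPointOf A fun ε => (γ ε).toFun (t ε)

/-- The complex path integral `∫_γ u(z) dz` along a piecewise `C¹` path. -/
noncomputable def pathIntegral (γ : PwC1Path) (u : ℂ → ℂ) : ℂ :=
  ∑ i : Fin γ.n, ∫ t in (γ.pt i.castSucc)..(γ.pt i.succ),
    u (γ.toFun t) * derivWithin γ.toFun (Set.Icc (γ.pt i.castSucc) (γ.pt i.succ)) t

/-- The path is closed: `γ(0) = γ(1)` as generalized points. -/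
def ClosedPath (γ : ℝ → PwC1Path) : Prop :=
  Negligible fun ε => (γ ε).toFun 1 - (γ ε).toFun 0

/-- A continuous, piecewise `C¹` function on `[0,1]²` (with its grid partition). -/
structure PwC1Homotopy where
  toFun : ℝ × ℝ → ℂ
  n : ℕ
  pt : Fin (n + 1) → ℝ
  mono : Monotone pt
  first : pt 0 = 0
  last : pt (Fin.last n) = 1
  cont : ContinuousOn toFun (Set.Icc 0 1 ×ˢ Set.Icc 0 1)
  piece : ∀ i j : Fin n, ContDiffOn ℝ 1 toFun
    (Set.Icc (pt i.castSucc) (pt i.succ) ×ˢ Set.Icc (pt j.castSucc) (pt j.succ))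

/-- A moderate net of piecewise `C¹` functions on the square. -/
def HomotopyModerate (H : ℝ → PwC1Homotopy) : Prop :=
  (∃ N : ℕ, EvSmall fun ε => ∀ p ∈ (Set.Icc (0:ℝ) 1 ×ˢ Set.Icc (0:ℝ) 1),
      ‖(H ε).toFun p‖ ≤ ε ^ (-(N:ℝ))) ∧
  (∃ N : ℕ, EvSmall fun ε =>
      ∀ᵐ p ∂(volume.restrict ((Set.Icc (0:ℝ) 1 ×ˢ Set.Icc (0:ℝ) 1) : Set (ℝ × ℝ))),
      ‖fderiv ℝ (H ε).toFun p‖ ≤ ε ^ (-(N:ℝ)))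

/-- `H` is a homotopy in `A` between the closed paths `γ` and `γ'`. -/
def IsHomotopyBetween (A : Set (ℝ → ℂ)) (γ γ' : ℝ → PwC1Path)
    (H : ℝ → PwC1Homotopy) : Prop :=
  HomotopyModerate H ∧
  (∀ t : ℝ → ℝ, (∀ ε, t ε ∈ Set.Icc (0:ℝ) 1) →
    (Negligible fun ε => (H ε).toFun (t ε, 0) - (γ ε).toFun (t ε)) ∧
    (Negligible fun ε => (H ε).toFun (t ε, 1) - (γ' ε).toFun (t ε))) ∧
  (∀ s : ℝ → ℝ, (∀ ε, s ε ∈ Set.Icc (0:ℝ) 1) →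
    Negligible fun ε => (H ε).toFun (0, s ε) - (H ε).toFun (1, s ε)) ∧
  (∀ t s : ℝ → ℝ, (∀ ε, t ε ∈ Set.Icc (0:ℝ) 1) → (∀ ε, s ε ∈ Set.Icc (0:ℝ) 1) →
    IsReprOfPointOf A fun ε => (H ε).toFun (t ε, s ε))

-- ### auxiliary lemmas

lemma EvSmall.and {P Q : ℝ → Prop} (hP : EvSmall P) (hQ : EvSmall Q) :
    EvSmall fun ε => P ε ∧ Q ε := by
  obtain ⟨a, ha0, ha1, ha⟩ := hP
  obtain ⟨b, hb0, hb1, hb⟩ := hQ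
  exact ⟨min a b, lt_min ha0 hb0, lt_of_le_of_lt (min_le_left _ _) ha1,
    fun ε hε hle => ⟨ha ε hε (hle.trans (min_le_left _ _)), hb ε hε (hle.trans (min_le_right _ _))⟩⟩

lemma EvSmall.mono {P Q : ℝ → Prop} (hP : EvSmall P)
    (h : ∀ ε, 0 < ε → ε < 1 → P ε → Q ε) : EvSmall Q := by
  obtain ⟨a, ha0, ha1, ha⟩ := hP
  exact ⟨a, ha0, ha1, fun ε hε hle => h ε hε (lt_of_le_of_lt hle ha1) (ha ε hε hle)⟩

lemma evSmall_le (c : ℝ) (hc : 0 < c) : EvSmall fun ε => ε ≤ c :=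
  ⟨min c 2⁻¹, lt_min hc (by norm_num), lt_of_le_of_lt (min_le_right _ _) (by norm_num),
    fun ε _ hle => hle.trans (min_le_left _ _)⟩

lemma Negligible.of_le {E F : Type*} [SeminormedAddGroup E] [SeminormedAddGroup F]
    {x : ℝ → E} {y : ℝ → F} (hy : Negligible y)
    (h : ∀ ε, 0 < ε → ε < 1 → ‖x ε‖ ≤ ‖y ε‖) : Negligible x :=
  fun m => (hy m).mono fun ε hε hε1 hb => (h ε hε hε1).trans hb

lemma Negligible.add' {E : Type*} [SeminormedAddGroup E] {x y : ℝ → E}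
    (hx : Negligible x) (hy : Negligible y) : Negligible fun ε => x ε + y ε := by
  intro m
  refine (((hx (m+1)).and (hy (m+1))).and (evSmall_le 2⁻¹ (by norm_num))).mono
    fun ε hε hε1 h => ?_
  obtain ⟨⟨h1, h2⟩, h3⟩ := h
  have e1 : ε ^ (((m:ℕ)+1:ℕ):ℝ) = ε ^ (m:ℝ) * ε := by
    push_cast; rw [Real.rpow_add hε, Real.rpow_one]
  have hm : (0:ℝ) ≤ ε ^ (m:ℝ) := Real.rpow_nonneg hε.le _
  have hxy : ‖x ε + y ε‖ ≤ 2 * (ε ^ (m:ℝ) * ε) := by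
    calc ‖x ε + y ε‖ ≤ ‖x ε‖ + ‖y ε‖ := norm_add_le _ _
    _ ≤ ε ^ (((m:ℕ)+1:ℕ):ℝ) + ε ^ (((m:ℕ)+1:ℕ):ℝ) := by push_cast at h1 h2 ⊢; linarith
    _ = 2 * (ε ^ (m:ℝ) * ε) := by rw [e1]; ring
  nlinarith

lemma negligible_refl {E : Type*} [SeminormedAddGroup E] (x : ℝ → E) :
    Negligible fun ε => x ε - x ε := by
  intro m
  exact (evSmall_le 2⁻¹ (by norm_num)).mono fun ε hε hε1 _ => by
    simp only [sub_self, norm_zero]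
    exact Real.rpow_nonneg hε.le _

lemma Negligible.symm' {E : Type*} [SeminormedAddGroup E] {x y : ℝ → E}
    (h : Negligible fun ε => x ε - y ε) : Negligible fun ε => y ε - x ε :=
  h.of_le fun ε _ _ => (norm_sub_rev _ _).le

lemma Negligible.trans' {E : Type*} [SeminormedAddGroup E] {x y z : ℝ → E}
    (h1 : Negligible fun ε => x ε - y ε) (h2 : Negligible fun ε => y ε - z ε) :
    Negligible fun ε => x ε - z ε := by
  have := h1.add' h2
  simpa [sub_add_sub_cancel] using this

lemma Negligible.moderate {E : Type*} [SeminormedAddGroup E] {x : ℝ → E}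
    (h : Negligible x) : Moderate x :=
  ⟨0, (h 0).mono fun ε hε hε1 hb => by simpa using hb⟩

lemma moderate_of_close {E : Type*} [SeminormedAddGroup E] {x y : ℝ → E}
    (hy : Moderate y) (h : Negligible fun ε => x ε - y ε) : Moderate x := by
  obtain ⟨N, hN⟩ := hy
  refine ⟨N + 1, ((hN.and (h 0)).and (evSmall_le 2⁻¹ (by norm_num))).mono
    fun ε hε hε1 hh => ?_⟩
  obtain ⟨⟨h1, h2⟩, h3⟩ := hh
  have e0 : ε ^ ((0:ℕ):ℝ) = 1 := by norm_num
  rw [e0] at h2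
  have hx : ‖x ε‖ ≤ ε ^ (-(N:ℝ)) + 1 := by
    calc ‖x ε‖ = ‖(x ε - y ε) + y ε‖ := by rw [sub_add_cancel]
    _ ≤ ‖x ε - y ε‖ + ‖y ε‖ := norm_add_le _ _
    _ ≤ 1 + ε ^ (-(N:ℝ)) := add_le_add h2 h1
    _ = ε ^ (-(N:ℝ)) + 1 := by ring
  have e1 : ε ^ (-((N:ℕ)+1:ℕ):ℝ) = ε ^ (-(N:ℝ)) * ε⁻¹ := by
    push_cast
    rw [show -((N:ℝ)+1) = -(N:ℝ) + (-1) by ring, Real.rpow_add hε, Real.rpow_neg_one]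
  have hinv : (2:ℝ) ≤ ε⁻¹ := by
    rw [show (2:ℝ) = (2⁻¹:ℝ)⁻¹ by norm_num]
    exact inv_anti₀ hε h3
  have h1' : (1:ℝ) ≤ ε ^ (-(N:ℝ)) := by
    calc (1:ℝ) = ε ^ (0:ℝ) := by rw [Real.rpow_zero]
    _ ≤ ε ^ (-(N:ℝ)) := Real.rpow_le_rpow_of_exponent_ge hε hε1.le (neg_nonpos.mpr (Nat.cast_nonneg N))
  rw [e1]
  nlinarith

lemma gf_exists_seq {R : ℕ → ℝ → Prop}
    (h : ∀ (k : ℕ) (δ : ℝ), 0 < δ → ∃ e, 0 < e ∧ e ≤ δ ∧ R k e) :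
    ∃ f : ℕ → ℝ, StrictAnti f ∧ ∀ k, 0 < f k ∧ f k ≤ (2:ℝ)⁻¹ ^ (k + 1) ∧ R k (f k) := by
  have h2 : (0:ℝ) < 2⁻¹ := by norm_num
  let g : ∀ k : ℕ, {e : ℝ // 0 < e ∧ e ≤ (2:ℝ)⁻¹ ^ (k+1) ∧ R k e} := fun k =>
    Nat.rec
      ⟨(h 0 2⁻¹ h2).choose, (h 0 2⁻¹ h2).choose_spec.1,
        by simpa using (h 0 2⁻¹ h2).choose_spec.2.1, (h 0 2⁻¹ h2).choose_spec.2.2⟩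
      (fun k p =>
        have hp : (0:ℝ) < min (p.1/2) ((2:ℝ)⁻¹^(k+2)) := lt_min (by linarith [p.2.1]) (by positivity)
        ⟨(h (k+1) _ hp).choose, (h (k+1) _ hp).choose_spec.1,
          le_trans (h (k+1) _ hp).choose_spec.2.1 (min_le_right _ _),
          (h (k+1) _ hp).choose_spec.2.2⟩) k
  refine ⟨fun k => (g k).1, strictAnti_nat_of_succ_lt (fun k => ?_), fun k => (g k).2⟩
  have hp : (0:ℝ) < min ((g k).1/2) ((2:ℝ)⁻¹^(k+2)) := lt_min (by linarith [(g k).2.1]) (by positivity)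
  have h1 : (g (k+1)).1 ≤ min ((g k).1/2) ((2:ℝ)⁻¹^(k+2)) := (h (k+1) _ hp).choose_spec.2.1
  have := le_trans h1 (min_le_left _ _)
  linarith [(g k).2.1]


/-- Proposition 3.7: description of `N(A)` for an internal sharply bounded set. -/
theorem NNeg_internal_sharplyBounded (d : ℕ)
    (A : Set (ℝ → EuclideanSpace ℝ (Fin d)))
    (Aε : ℝ → Set (EuclideanSpace ℝ (Fin d)))
    (hA : A = InternalSet Aε) (hne : A.Nonempty)
    (hbdA : SharplyBddSet A) (hbd : SharplyBddRep Aε)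
    (u : ℝ → EuclideanSpace ℝ (Fin d) → ℂ) (hsm : SmoothNet u) :
    (NNeg A u ↔ ∀ n m : ℕ, ∃ N : ℕ, EvSmall fun ε =>
        ∀ x ∈ Metric.cthickening (ε ^ (N : ℝ)) (Aε ε),
          ‖iteratedFDeriv ℝ n (u ε) x‖ ≤ ε ^ (m : ℝ)) ∧
    (NNeg A u ↔ (EMod A u ∧ ∀ n m : ℕ, EvSmall fun ε =>
        ∀ x ∈ Aε ε, ‖iteratedFDeriv ℝ n (u ε) x‖ ≤ ε ^ (m : ℝ))) := by
  classical
  -- base point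
  obtain ⟨a0, ha0⟩ := hne
  rw [hA] at ha0
  obtain ⟨ha0mod, y0, ha0y, hy0A⟩ := ha0
  have ha0y' : Negligible fun ε => a0 ε - y0 ε := ha0y
  have hy0mod : Moderate y0 := moderate_of_close ha0mod ha0y'.symm'
  have hy0inA : y0 ∈ A := by
    rw [hA]; exact ⟨hy0mod, y0, negligible_refl y0, hy0A⟩
  -- characterization of representatives
  have hrepr : ∀ x, IsReprOfPointOf A x ↔
      (Moderate x ∧ ∃ y : ℝ → EuclideanSpace ℝ (Fin d), (Negligible fun ε => x ε - y ε) ∧ EvSmall fun ε => y ε ∈ Aε ε) := by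
    intro x
    constructor
    · rintro ⟨hxm, a, haA, hxa⟩
      rw [hA] at haA
      obtain ⟨_, y, hay, hyA⟩ := haA
      have hxa' : Negligible fun ε => x ε - a ε := hxa
      have hay' : Negligible fun ε => a ε - y ε := hay
      exact ⟨hxm, y, hxa'.trans' hay', hyA⟩
    · rintro ⟨hxm, y, hxy, hyA⟩
      have hym : Moderate y := moderate_of_close hxm hxy.symm'
      refine ⟨hxm, y, ?_, hxy⟩
      rw [hA]
      exact ⟨hym, y, negligible_refl y, hyA⟩
  -- (ii) → NNeg
  have h2 : (∀ n m : ℕ, ∃ N : ℕ, EvSmall fun ε =>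
      ∀ x ∈ Metric.cthickening (ε ^ (N : ℝ)) (Aε ε),
        ‖iteratedFDeriv ℝ n (u ε) x‖ ≤ ε ^ (m : ℝ)) → NNeg A u := by
    intro hP
    refine ⟨hsm, fun n x hx => ?_⟩
    obtain ⟨hxm, y, hxy, hyA⟩ := (hrepr x).1 hx
    intro m
    obtain ⟨N, hN⟩ := hP n m
    refine ((hN.and (hxy N)).and hyA).mono fun ε hε hε1 hh => ?_
    obtain ⟨⟨h1, h2'⟩, h3⟩ := hh
    exact h1 (x ε) (Metric.mem_cthickening_of_dist_le (x ε) (y ε) _ _ h3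
      (by rw [dist_eq_norm]; exact h2'))
  -- NNeg → (ii)
  have h1 : NNeg A u → (∀ n m : ℕ, ∃ N : ℕ, EvSmall fun ε =>
      ∀ x ∈ Metric.cthickening (ε ^ (N : ℝ)) (Aε ε),
        ‖iteratedFDeriv ℝ n (u ε) x‖ ≤ ε ^ (m : ℝ)) := by
    intro hN
    by_contra hc
    push_neg at hc
    obtain ⟨n, m, hc⟩ := hc
    simp only [EvSmall] at hc
    push_neg at hc
    obtain ⟨f, hfa, hf⟩ := gf_exists_seq
      (R := fun k e => e < 1 ∧ ∃ x ∈ Metric.cthickening (e ^ (k:ℝ)) (Aε e),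
        e ^ (m:ℝ) < ‖iteratedFDeriv ℝ n (u e) x‖) (by
      intro k δ hδ
      obtain ⟨e, he0, he1, hx⟩ := hc k (min δ 2⁻¹) (lt_min hδ (by norm_num))
        (lt_of_le_of_lt (min_le_right _ _) (by norm_num))
      exact ⟨e, he0, he1.trans (min_le_left _ _),
        lt_of_le_of_lt (he1.trans (min_le_right _ _)) (by norm_num), hx⟩)
    have hfpos : ∀ k, 0 < f k := fun k => (hf k).1
    have hfle : ∀ k, f k ≤ (2:ℝ)⁻¹ ^ (k+1) := fun k => (hf k).2.1
    have hflt1 : ∀ k, f k < 1 := fun k => (hf k).2.2.1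
    have hinj : Function.Injective f := hfa.injective
    choose b hb1 hb2 using fun k => (hf k).2.2.2
    have hnear : ∀ k, ∃ w ∈ Aε (f k), dist (b k) w < 2 * (f k)^(k:ℝ) := by
      intro k
      have hp : (0:ℝ) < (f k)^(k:ℝ) := Real.rpow_pos_of_pos (hfpos k) _
      have h1 : b k ∈ Metric.thickening (2*(f k)^(k:ℝ)) (Aε (f k)) :=
        Metric.cthickening_subset_thickening' (by linarith) (by linarith) _ (hb1 k)
      exact Metric.mem_thickening_iff.1 h1
    choose w hw1 hw2 using hnear
    set X : ℝ → EuclideanSpace ℝ (Fin d) :=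
      fun ε => if h : ∃ k, f k = ε then b h.choose else y0 ε with hXdef
    set W : ℝ → EuclideanSpace ℝ (Fin d) :=
      fun ε => if h : ∃ k, f k = ε then w h.choose else y0 ε with hWdef
    have hXf : ∀ k, X (f k) = b k := by
      intro k
      have h : ∃ j, f j = f k := ⟨k, rfl⟩
      simp only [hXdef, dif_pos h]
      rw [hinj h.choose_spec]
    have hWA : EvSmall fun ε => W ε ∈ Aε ε := by
      obtain ⟨ε₀, h0, h1, hy⟩ := hy0A
      refine ⟨ε₀, h0, h1, fun ε hε hle => ?_⟩
      by_cases h : ∃ k, f k = ε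
      · obtain ⟨k, hk⟩ := id h
        simp only [hWdef, dif_pos h]
        rw [hinj (h.choose_spec.trans hk.symm), ← hk]
        exact hw1 k
      · simp only [hWdef, dif_neg h]
        exact hy ε hε hle
    have hWmod : Moderate W := by
      obtain ⟨M, hM⟩ := hbd
      obtain ⟨N₀, hN₀⟩ := hy0mod
      refine ⟨max M N₀, (hM.and hN₀).mono fun ε hε hε1 hh => ?_⟩
      obtain ⟨hM', hN₀'⟩ := hh
      have hmono : ∀ j : ℕ, j ≤ max M N₀ → ε ^ (-(j:ℝ)) ≤ ε ^ (-(max M N₀:ℕ):ℝ) := by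
        intro j hj
        apply Real.rpow_le_rpow_of_exponent_ge hε hε1.le
        push_cast
        simp only [neg_le_neg_iff]
        exact_mod_cast hj
      by_cases h : ∃ k, f k = ε
      · obtain ⟨k, hk⟩ := id h
        simp only [hWdef, dif_pos h]
        rw [hinj (h.choose_spec.trans hk.symm)]
        calc ‖w k‖ ≤ ε ^ (-(M:ℝ)) := hM' _ (hk ▸ hw1 k)
        _ ≤ _ := hmono M (le_max_left _ _)
      · simp only [hWdef, dif_neg h]
        exact le_trans hN₀' (hmono N₀ (le_max_right _ _))
    have hXW : Negligible fun ε => X ε - W ε := by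
      intro m'
      refine ⟨min (f (m'+1)) 2⁻¹, lt_min (hfpos _) (by norm_num),
        lt_of_le_of_lt (min_le_right _ _) (by norm_num), fun ε hε hle => ?_⟩
      by_cases h : ∃ k, f k = ε
      · simp only [hXdef, hWdef, dif_pos h]
        set k := h.choose with hkdef
        have hk : f k = ε := h.choose_spec
        have hε1 : ε < 1 := hk ▸ hflt1 k
        have hkge : m' + 1 ≤ k := by
          by_contra hlt
          push_neg at hlt
          have := hfa hlt
          have h4 := hle.trans (min_le_left _ _)
          rw [hk] at this
          linarith
        have hε2 : ε ≤ 2⁻¹ := hle.trans (min_le_right _ _)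
        have hrm : (0:ℝ) ≤ ε ^ (m':ℝ) := Real.rpow_nonneg hε.le _
        calc ‖b k - w k‖ = dist (b k) (w k) := (dist_eq_norm _ _).symm
        _ ≤ 2 * (f k)^(k:ℝ) := (hw2 k).le
        _ = 2 * ε^(k:ℝ) := by rw [hk]
        _ ≤ 2 * ε^((m'+1:ℕ):ℝ) := by
            have := Real.rpow_le_rpow_of_exponent_ge hε hε1.le
              (show ((m'+1:ℕ):ℝ) ≤ (k:ℝ) by exact_mod_cast hkge)
            linarith
        _ ≤ ε^(m':ℝ) := by
            have e1 : ε ^ ((m'+1:ℕ):ℝ) = ε ^ (m':ℝ) * ε := by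
              push_cast; rw [Real.rpow_add hε, Real.rpow_one]
            rw [e1]; nlinarith
      · simp only [hXdef, hWdef, dif_neg h, sub_self, norm_zero]
        positivity
    have hWinA : W ∈ A := by
      rw [hA]; exact ⟨hWmod, W, negligible_refl W, hWA⟩
    have hXrepr : IsReprOfPointOf A X := ⟨moderate_of_close hWmod hXW, W, hWinA, hXW⟩
    obtain ⟨ε₁, hε₁0, hε₁1, hfin⟩ := hN.2 n X hXrepr m
    obtain ⟨K, hK⟩ := exists_pow_lt_of_lt_one hε₁0 (show (2:ℝ)⁻¹ < 1 by norm_num)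
    have hfK : f K ≤ ε₁ := by
      refine le_trans (hfle K) (le_trans ?_ hK.le)
      exact pow_le_pow_of_le_one (by norm_num) (by norm_num) (Nat.le_succ K)
    have hcon : ‖iteratedFDeriv ℝ n (u (f K)) (X (f K))‖ ≤ (f K) ^ (m:ℝ) :=
      hfin (f K) (hfpos K) hfK
    rw [hXf K] at hcon
    exact absurd hcon (not_le.2 (hb2 K))
  -- (iii) → NNeg
  have h3 : EMod A u → (∀ n m : ℕ, EvSmall fun ε =>
      ∀ x ∈ Aε ε, ‖iteratedFDeriv ℝ n (u ε) x‖ ≤ ε ^ (m : ℝ)) → NNeg A u := by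
    intro hE hsup
    refine ⟨hsm, fun n x hx => ?_⟩
    obtain ⟨hxm, y, hxy, hyAe⟩ := (hrepr x).1 hx
    have hyinA : y ∈ A := by
      rw [hA]
      exact ⟨moderate_of_close hxm hxy.symm', y, negligible_refl y, hyAe⟩
    -- max of ‖D^{n+1}u‖ on the segment
    have maxex : ∀ ε : ℝ, (0 < ε ∧ ε < 1) → ∃ p ∈ segment ℝ (x ε) (y ε),
        ∀ q ∈ segment ℝ (x ε) (y ε),
          ‖iteratedFDeriv ℝ (n+1) (u ε) q‖ ≤ ‖iteratedFDeriv ℝ (n+1) (u ε) p‖ := by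
      rintro ε ⟨hε, hε1⟩
      have hcomp : IsCompact (segment ℝ (x ε) (y ε)) := by
        rw [segment_eq_image]
        exact (isCompact_Icc).image
          (((continuous_const.sub continuous_id).smul continuous_const).add
            (continuous_id.smul continuous_const))
      have hcont : ContinuousOn (fun q => ‖iteratedFDeriv ℝ (n+1) (u ε) q‖)
          (segment ℝ (x ε) (y ε)) :=
        (((hsm ε hε hε1).continuous_iteratedFDeriv (by exact_mod_cast le_top)).norm).continuousOn
      obtain ⟨p, hp, hmax⟩ := hcomp.exists_isMaxOn ⟨x ε, left_mem_segment ℝ _ _⟩ hcont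
      exact ⟨p, hp, fun q hq => hmax hq⟩
    set z : ℝ → EuclideanSpace ℝ (Fin d) :=
      fun ε => if h : 0 < ε ∧ ε < 1 then (maxex ε h).choose else y ε with hzdef
    have hzseg : ∀ ε : ℝ, 0 < ε → ε < 1 → z ε ∈ segment ℝ (x ε) (y ε) := by
      intro ε hε hε1
      simp only [hzdef, dif_pos (⟨hε, hε1⟩ : 0 < ε ∧ ε < 1)]
      exact (maxex ε ⟨hε, hε1⟩).choose_spec.1
    have hzmax : ∀ ε : ℝ, 0 < ε → ε < 1 → ∀ q ∈ segment ℝ (x ε) (y ε),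
        ‖iteratedFDeriv ℝ (n+1) (u ε) q‖ ≤ ‖iteratedFDeriv ℝ (n+1) (u ε) (z ε)‖ := by
      intro ε hε hε1
      simp only [hzdef, dif_pos (⟨hε, hε1⟩ : 0 < ε ∧ ε < 1)]
      exact (maxex ε ⟨hε, hε1⟩).choose_spec.2
    have hznear : ∀ ε : ℝ, 0 < ε → ε < 1 → ‖z ε - y ε‖ ≤ ‖x ε - y ε‖ := by
      intro ε hε hε1
      obtain ⟨a, b', ha, hb', hab, heq⟩ := hzseg ε hε hε1
      have hzy : z ε - y ε = a • (x ε - y ε) := by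
        rw [← heq]
        have : b' = 1 - a := by linarith
        rw [this]
        module
      rw [hzy, norm_smul]
      have : |a| ≤ 1 := by rw [abs_of_nonneg ha]; linarith
      calc ‖a‖ * ‖x ε - y ε‖ ≤ 1 * ‖x ε - y ε‖ := by
            apply mul_le_mul_of_nonneg_right _ (norm_nonneg _)
            simpa using this
      _ = ‖x ε - y ε‖ := one_mul _
    have hzy : Negligible fun ε => z ε - y ε :=
      hxy.of_le fun ε hε hε1 => hznear ε hε hε1
    have hzrepr : IsReprOfPointOf A z :=
      ⟨moderate_of_close (moderate_of_close hxm hxy.symm') hzy, y, hyinA, hzy⟩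
    obtain ⟨N, hNod⟩ := hE.2 (n+1) z hzrepr
    intro m
    refine ((((hsup n (m+1)).and hyAe).and ((hxy (m+1+N)).and hNod)).and
      (evSmall_le 2⁻¹ (by norm_num))).mono fun ε hε hε1 hh => ?_
    obtain ⟨⟨⟨hS, hyA⟩, hxyb, hNb⟩, hhalf⟩ := hh
    -- mean value estimate
    have hdiff : ∀ p ∈ segment ℝ (x ε) (y ε),
        DifferentiableAt ℝ (iteratedFDeriv ℝ n (u ε)) p := by
      intro p _
      have : ContDiff ℝ (1:ℕ∞) (iteratedFDeriv ℝ n (u ε)) :=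
        (hsm ε hε hε1).iteratedFDeriv_right (by exact_mod_cast le_top)
      exact (this.differentiable (by simp)).differentiableAt
    have hbound : ∀ p ∈ segment ℝ (x ε) (y ε),
        ‖fderiv ℝ (iteratedFDeriv ℝ n (u ε)) p‖ ≤ ε ^ (-(N:ℝ)) := by
      intro p hp
      rw [norm_fderiv_iteratedFDeriv]
      exact le_trans (hzmax ε hε hε1 p hp) hNb
    have hmvt := (convex_segment (x ε) (y ε)).norm_image_sub_le_of_norm_fderiv_le
      hdiff hbound (y := x ε) (x := y ε)
      (right_mem_segment ℝ _ _) (left_mem_segment ℝ _ _)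
    -- assemble
    have e1 : ε ^ (-(N:ℝ)) * ε ^ ((m+1+N:ℕ):ℝ) = ε ^ ((m+1:ℕ):ℝ) := by
      rw [← Real.rpow_add hε]
      push_cast
      ring_nf
    have hstep : ‖iteratedFDeriv ℝ n (u ε) (x ε) - iteratedFDeriv ℝ n (u ε) (y ε)‖
        ≤ ε ^ ((m+1:ℕ):ℝ) := by
      calc ‖iteratedFDeriv ℝ n (u ε) (x ε) - iteratedFDeriv ℝ n (u ε) (y ε)‖
          ≤ ε ^ (-(N:ℝ)) * ‖x ε - y ε‖ := hmvt
      _ ≤ ε ^ (-(N:ℝ)) * ε ^ ((m+1+N:ℕ):ℝ) := by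
          apply mul_le_mul_of_nonneg_left hxyb (Real.rpow_nonneg hε.le _)
      _ = ε ^ ((m+1:ℕ):ℝ) := e1
    have hya : ‖iteratedFDeriv ℝ n (u ε) (y ε)‖ ≤ ε ^ ((m+1:ℕ):ℝ) := by
      exact_mod_cast hS (y ε) hyA
    have e2 : ε ^ ((m+1:ℕ):ℝ) = ε ^ (m:ℝ) * ε := by
      push_cast; rw [Real.rpow_add hε, Real.rpow_one]
    have hrm : (0:ℝ) ≤ ε ^ (m:ℝ) := Real.rpow_nonneg hε.le _
    calc ‖iteratedFDeriv ℝ n (u ε) (x ε)‖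
        = ‖iteratedFDeriv ℝ n (u ε) (y ε) +
            (iteratedFDeriv ℝ n (u ε) (x ε) - iteratedFDeriv ℝ n (u ε) (y ε))‖ := by
          congr 1
          abel
    _ ≤ ‖iteratedFDeriv ℝ n (u ε) (y ε)‖ +
        ‖iteratedFDeriv ℝ n (u ε) (x ε) - iteratedFDeriv ℝ n (u ε) (y ε)‖ := norm_add_le _ _
    _ ≤ ε ^ ((m+1:ℕ):ℝ) + ε ^ ((m+1:ℕ):ℝ) := add_le_add hya hstep
    _ ≤ ε ^ (m:ℝ) := by rw [e2]; nlinarith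
  constructor
  · exact ⟨h1, h2⟩
  constructor
  · intro hN
    refine ⟨⟨hsm, fun n x hx => (hN.2 n x hx).moderate⟩, fun n m => ?_⟩
    obtain ⟨N, hNN⟩ := h1 hN n m
    exact hNN.mono fun ε hε hε1 hh x hxA =>
      hh x (Metric.self_subset_cthickening _ hxA)
  · rintro ⟨hE, hsup⟩
    exact h3 hE hsup


end
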